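/- arXiv:1607.04513 — 6 statements merged into one kernel-verified Lean document; each statement's English description precedes it below -/
import Mathlib

section
/- Let n be a natural number, a_0,…,a_n integers, ℓ ≥ 1 an integer, p a prime number, and s a complex number with Re(s) > n + 1/ℓ. Then the series ∑_{m=1}^∞ (∑_{k=0}^n a_k·p^{ℓkm}) / m · p^{-ℓsm} converges absolutely, each complex number 1 − p^{ℓ(k−s)} (principal complex power of the positive real p) is nonzero, and exp( ∑_{m=1}^∞ (∑_{k=0}^n a_k·p^{ℓkm}) / m · p^{-ℓsm} ) = ∏_{k=0}^n (1 − p^{ℓ(k−s)})^{−a_k}, where the integer exponents −a_k are taken as zpow. -/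
open Complex Finset

/-- (iii) ⇒ (ii) of the main theorem on schemes of `F_{1^ℓ}`-type: if the point counts over
`F_{p^{ℓm}}` are given by the polynomial `N(Y) = ∑ a_k Y^k`, then the local zeta function over
`F_{p^ℓ}` equals `∏_{k=0}^n (1 - p^{ℓ(k-s)})^{-a_k}` for `Re(s) > n + 1/ℓ`. -/
theorem stmt_0 (n : ℕ) (a : ℕ → ℤ) (ℓ : ℕ) (hℓ : 1 ≤ ℓ) (p : ℕ) (hp : p.Prime) (s : ℂ)
    (hs : (n : ℝ) + 1 / (ℓ : ℝ) < s.re) :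
    Summable (fun m : ℕ+ =>
      ‖((∑ k ∈ Finset.range (n + 1), (a k : ℂ) * (p : ℂ) ^ (ℓ * k * (m : ℕ))) / ((m : ℕ) : ℂ))
        * (p : ℂ) ^ (-(ℓ : ℂ) * s * ((m : ℕ) : ℂ))‖)
    ∧ (∀ k ∈ Finset.range (n + 1), (1 : ℂ) - (p : ℂ) ^ ((ℓ : ℂ) * ((k : ℂ) - s)) ≠ 0)
    ∧ Complex.exp (∑' m : ℕ+,
        ((∑ k ∈ Finset.range (n + 1), (a k : ℂ) * (p : ℂ) ^ (ℓ * k * (m : ℕ))) / ((m : ℕ) : ℂ))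
          * (p : ℂ) ^ (-(ℓ : ℂ) * s * ((m : ℕ) : ℂ)))
      = ∏ k ∈ Finset.range (n + 1),
          ((1 : ℂ) - (p : ℂ) ^ ((ℓ : ℂ) * ((k : ℂ) - s))) ^ (-(a k)) := by
  have hp1 : (1 : ℝ) < (p : ℝ) := by exact_mod_cast hp.one_lt
  have hp0 : (0 : ℝ) < (p : ℝ) := by linarith
  have hpc : (p : ℂ) ≠ 0 := by
    exact_mod_cast (Nat.cast_pos.mpr hp.pos).ne'
  have hℓ0 : (0 : ℝ) < (ℓ : ℝ) := by exact_mod_cast hℓ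
  set z : ℕ → ℂ := fun k => (p : ℂ) ^ ((ℓ : ℂ) * ((k : ℂ) - s)) with hz_def
  -- norm bound
  have hz : ∀ k ∈ Finset.range (n + 1), ‖z k‖ < 1 := by
    intro k hk
    have hk' : (k : ℝ) ≤ n := by
      exact_mod_cast Nat.lt_succ_iff.mp (Finset.mem_range.mp hk)
    have hre : ((ℓ : ℂ) * ((k : ℂ) - s)).re = (ℓ : ℝ) * ((k : ℝ) - s.re) := by
      simp [Complex.mul_re]
    have hneg : (ℓ : ℝ) * ((k : ℝ) - s.re) < 0 := by
      have h1 : (0 : ℝ) < 1 / (ℓ : ℝ) := by positivity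
      have : (k : ℝ) - s.re < 0 := by linarith
      exact mul_neg_of_pos_of_neg hℓ0 this
    have : ‖z k‖ = (p : ℝ) ^ ((ℓ : ℂ) * ((k : ℂ) - s)).re := by
      rw [hz_def]
      simpa using Complex.norm_cpow_eq_rpow_re_of_pos hp0 ((ℓ : ℂ) * ((k : ℂ) - s))
    rw [this, hre]
    exact Real.rpow_lt_one_of_one_lt_of_neg hp1 hneg
  -- nonvanishing
  have hne : ∀ k ∈ Finset.range (n + 1), (1 : ℂ) - z k ≠ 0 := by
    intro k hk h
    have h1 : z k = 1 := by linear_combination -h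
    have h2 := hz k hk
    rw [h1] at h2
    simp at h2
  -- term identity
  have hterm : ∀ k, ∀ m : ℕ,
      (p : ℂ) ^ (ℓ * k * m) * (p : ℂ) ^ (-(ℓ : ℂ) * s * (m : ℂ)) = z k ^ m := by
    intro k m
    rw [hz_def, ← Complex.cpow_nat_mul, ← Complex.cpow_natCast (p : ℂ) (ℓ * k * m),
      ← Complex.cpow_add _ _ hpc]
    congr 1
    push_cast
    ring
  -- rewrite each term of the series
  have hfun : ∀ m : ℕ+,
      ((∑ k ∈ Finset.range (n + 1), (a k : ℂ) * (p : ℂ) ^ (ℓ * k * (m : ℕ))) / ((m : ℕ) : ℂ))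
        * (p : ℂ) ^ (-(ℓ : ℂ) * s * ((m : ℕ) : ℂ))
      = ∑ k ∈ Finset.range (n + 1), (a k : ℂ) * (z k ^ (m : ℕ) / ((m : ℕ) : ℂ)) := by
    intro m
    rw [div_mul_eq_mul_div, Finset.sum_mul, Finset.sum_div]
    refine Finset.sum_congr rfl fun k _ => ?_
    rw [mul_assoc, hterm k m, mul_div_assoc]
  -- summability over ℕ+ for each k
  have hsumk : ∀ k ∈ Finset.range (n + 1),
      Summable (fun m : ℕ+ => (a k : ℂ) * (z k ^ (m : ℕ) / ((m : ℕ) : ℂ))) := by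
    intro k hk
    have h1 : Summable (fun m : ℕ => z k ^ m / (m : ℂ)) :=
      (hasSum_taylorSeries_neg_log (hz k hk)).summable
    exact (((h1.comp_injective PNat.coe_injective).mul_left _))
  -- tsum over ℕ+ for each k
  have htsumk : ∀ k ∈ Finset.range (n + 1),
      (∑' m : ℕ+, (a k : ℂ) * (z k ^ (m : ℕ) / ((m : ℕ) : ℂ)))
        = (a k : ℂ) * (-Complex.log (1 - z k)) := by
    intro k hk
    have h1 : HasSum (fun m : ℕ => z k ^ m / (m : ℂ)) (-Complex.log (1 - z k)) :=
      hasSum_taylorSeries_neg_log (hz k hk)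
    have h2 : HasSum (fun m : ℕ+ => z k ^ (m : ℕ) / ((m : ℕ) : ℂ))
        (-Complex.log (1 - z k)) := by
      refine (Function.Injective.hasSum_iff (f := fun m : ℕ => z k ^ m / (m : ℂ))
        PNat.coe_injective ?_).mpr h1
      intro x hx
      have : x = 0 := by
        by_contra h
        exact hx ⟨⟨x, Nat.pos_of_ne_zero h⟩, rfl⟩
      simp [this]
    rw [(h2.mul_left (a k : ℂ)).tsum_eq]
  refine ⟨?_, ?_, ?_⟩
  · -- summability of norms
    have hb : Summable (fun m : ℕ+ =>
        ∑ k ∈ Finset.range (n + 1), ‖(a k : ℂ) * (z k ^ (m : ℕ) / ((m : ℕ) : ℂ))‖) := by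
      refine summable_sum fun k hk => ?_
      exact (hsumk k hk).norm
    refine Summable.of_nonneg_of_le (fun m => norm_nonneg _) (fun m => ?_) hb
    rw [hfun m]
    exact norm_sum_le _ _
  · exact hne
  · -- the main identity
    have hswap : (∑' m : ℕ+,
        ((∑ k ∈ Finset.range (n + 1), (a k : ℂ) * (p : ℂ) ^ (ℓ * k * (m : ℕ))) / ((m : ℕ) : ℂ))
          * (p : ℂ) ^ (-(ℓ : ℂ) * s * ((m : ℕ) : ℂ)))
        = ∑ k ∈ Finset.range (n + 1),
            ∑' m : ℕ+, (a k : ℂ) * (z k ^ (m : ℕ) / ((m : ℕ) : ℂ)) := by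
      rw [tsum_congr hfun]
      exact Summable.tsum_finsetSum hsumk
    rw [hswap, Finset.sum_congr rfl htsumk, Complex.exp_sum]
    refine Finset.prod_congr rfl fun k hk => ?_
    have hw : (1 : ℂ) - z k ≠ 0 := hne k hk
    rw [show (a k : ℂ) * (-Complex.log (1 - z k))
        = Complex.log (1 - z k) * ((-(a k) : ℤ) : ℂ) by push_cast; ring,
      ← Complex.cpow_def_of_ne_zero hw, Complex.cpow_intCast]
end

section
/- Let q ≥ 2 be a natural number, n a natural number, a_0,…,a_n integers, and c : ℕ⁺ → ℤ a function for which there exist constants A ≥ 0 and B ∈ ℕ with |c(m)| ≤ A·q^{Bm} for all m ≥ 1. Suppose that for every real number s > max(n, B) + 1 one has exp( ∑_{m=1}^∞ c(m)/m · q^{−sm} ) = ∏_{k=0}^n (1 − q^{k−s})^{−a_k} (an identity of real numbers, the integer exponents −a_k taken as zpow; note 0 < q^{k−s} < 1 so each base is nonzero). Then c(m) = ∑_{k=0}^n a_k·q^{km} for every m ≥ 1. -/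
open Finset


lemma coeff_zero_of_hasSum_zero (E : ℕ → ℝ) (C r : ℝ) (hC : 0 ≤ C) (hr : 0 < r)
    (hE : ∀ j, |E j| ≤ C * r ^ (j + 1)) (x₀ : ℝ) (hx₀ : 0 < x₀) (hrx₀ : r * x₀ ≤ 1 / 2)
    (hsum : ∀ x : ℝ, 0 < x → x < x₀ → HasSum (fun j => E j * x ^ (j + 1)) 0) :
    ∀ j, E j = 0 := by
  intro m
  induction m using Nat.strong_induction_on with
  | _ m ih =>
  have key : ∀ x : ℝ, 0 < x → x < x₀ →
      |E m| * x ^ (m + 1) ≤ (2 * C * r ^ (m + 2) * x) * x ^ (m + 1) := by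
    intro x hx hxlt
    have hrx : 0 ≤ r * x := by positivity
    have hrx2 : r * x ≤ 1 / 2 := by nlinarith [mul_lt_mul_of_pos_left hxlt hr]
    have hrx1 : r * x < 1 := by linarith
    have hf := hsum x hx hxlt
    set f : ℕ → ℝ := fun j => E j * x ^ (j + 1) with hfdef
    have htail : HasSum (fun j => f (j + (m + 1))) (0 - ∑ i ∈ range (m + 1), f i) :=
      (hasSum_nat_add_iff' (m + 1)).mpr hf
    have hsum_eq : ∑ i ∈ range (m + 1), f i = f m := by
      rw [Finset.sum_range_succ]
      have h0 : ∑ i ∈ range m, f i = 0 := by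
        apply Finset.sum_eq_zero
        intro i hi
        simp [hfdef, ih i (Finset.mem_range.mp hi)]
      rw [h0, zero_add]
    rw [hsum_eq, zero_sub] at htail
    have hgeo : HasSum (fun j : ℕ => C * (r * x) ^ (m + 2) * (r * x) ^ j)
        (C * (r * x) ^ (m + 2) * (1 - r * x)⁻¹) :=
      (hasSum_geometric_of_lt_one hrx hrx1).mul_left _
    have hbound : ∀ j : ℕ, ‖f (j + (m + 1))‖ ≤ C * (r * x) ^ (m + 2) * (r * x) ^ j := by
      intro j
      have h1 : |f (j + (m + 1))| = |E (j + (m + 1))| * x ^ (j + (m + 1) + 1) := by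
        rw [hfdef]; rw [abs_mul, abs_pow, abs_of_pos hx]
      rw [Real.norm_eq_abs, h1]
      calc |E (j + (m + 1))| * x ^ (j + (m + 1) + 1)
          ≤ C * r ^ (j + (m + 1) + 1) * x ^ (j + (m + 1) + 1) :=
            mul_le_mul_of_nonneg_right (hE _) (by positivity)
        _ = C * (r * x) ^ (m + 2) * (r * x) ^ j := by
            rw [show j + (m + 1) + 1 = (m + 2) + j by ring, pow_add r, pow_add x,
              mul_pow, mul_pow]
            ring
    have hnorm := tsum_of_norm_bounded hgeo hbound
    rw [htail.tsum_eq] at hnorm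
    have h2 : ‖-f m‖ = |E m| * x ^ (m + 1) := by
      rw [norm_neg, Real.norm_eq_abs, hfdef, abs_mul, abs_pow, abs_of_pos hx]
    rw [h2] at hnorm
    have hinv : (1 - r * x)⁻¹ ≤ 2 := by
      rw [inv_le_comm₀ (by linarith) (by norm_num)]
      linarith
    calc |E m| * x ^ (m + 1) ≤ C * (r * x) ^ (m + 2) * (1 - r * x)⁻¹ := hnorm
      _ ≤ C * (r * x) ^ (m + 2) * 2 := by
          apply mul_le_mul_of_nonneg_left hinv (by positivity)
      _ = (2 * C * r ^ (m + 2) * x) * x ^ (m + 1) := by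
          rw [mul_pow]; ring
  -- conclude E m = 0
  have habs : |E m| ≤ 0 := by
    apply le_of_forall_pos_le_add
    intro ε hε
    set K := 2 * C * r ^ (m + 2) with hK
    have hK0 : 0 ≤ K := by positivity
    set x := min (x₀ / 2) (ε / (K + 1)) with hx
    have hxpos : 0 < x := lt_min (by linarith) (by positivity)
    have hxlt : x < x₀ := lt_of_le_of_lt (min_le_left _ _) (by linarith)
    have hkey := key x hxpos hxlt
    have hxp : (0:ℝ) < x ^ (m + 1) := by positivity
    have h3 : |E m| ≤ K * x := le_of_mul_le_mul_right hkey hxp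
    have h4 : K * x ≤ ε := by
      have hx2 : x ≤ ε / (K + 1) := min_le_right _ _
      have : K * x ≤ K * (ε / (K + 1)) := mul_le_mul_of_nonneg_left hx2 hK0
      calc K * x ≤ K * (ε / (K + 1)) := this
        _ ≤ ε := by
          rw [mul_div_assoc']
          rw [div_le_iff₀ (by linarith)]
          nlinarith
    linarith
  exact abs_eq_zero.mp (le_antisymm habs (abs_nonneg _))

/-- (ii) ⇒ (iii) of the main theorem on schemes of `F_{1^ℓ}`-type: if the local zeta function
`exp(∑_{m≥1} c(m)/m · q^{-sm})` of a counting function `c` over `F_q` agrees, for all real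
`s > max(n, B) + 1`, with the Euler factor `∏_{k=0}^n (1 - q^{k-s})^{-a_k}`, then
`c(m) = ∑_{k=0}^n a_k q^{km}` for all `m ≥ 1`. -/
theorem stmt_1 (q : ℕ) (hq : 2 ≤ q) (n : ℕ) (a : ℕ → ℤ) (c : ℕ+ → ℤ)
    (A : ℝ) (hA : 0 ≤ A) (B : ℕ)
    (hgrow : ∀ m : ℕ+, |(c m : ℝ)| ≤ A * (q : ℝ) ^ (B * (m : ℕ)))
    (heq : ∀ s : ℝ, ((max n B : ℕ) : ℝ) + 1 < s →
      Real.exp (∑' m : ℕ+, ((c m : ℝ) / ((m : ℕ) : ℝ)) * (q : ℝ) ^ (-s * ((m : ℕ) : ℝ)))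
        = ∏ k ∈ Finset.range (n + 1), ((1 : ℝ) - (q : ℝ) ^ ((k : ℝ) - s)) ^ (-(a k))) :
    ∀ m : ℕ+, c m = ∑ k ∈ Finset.range (n + 1), a k * (q : ℤ) ^ (k * (m : ℕ)) := by
  set Q : ℝ := (q : ℝ) with hQdef
  have hQ2 : (2 : ℝ) ≤ Q := by rw [hQdef]; exact_mod_cast hq
  have hQ1 : (1 : ℝ) < Q := by linarith
  have hQ0 : (0 : ℝ) < Q := by linarith
  set M : ℕ := max n B with hMdef
  set r : ℝ := Q ^ M with hrdef
  have hr1 : (1 : ℝ) ≤ r := by rw [hrdef]; exact one_le_pow₀ (by linarith)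
  have hrpos : (0 : ℝ) < r := by linarith
  set x₀ : ℝ := Q ^ (-((M : ℝ) + 1)) with hx₀def
  have hx₀pos : 0 < x₀ := Real.rpow_pos_of_pos hQ0 _
  have hrx₀ : r * x₀ ≤ 1 / 2 := by
    have h1 : r * x₀ = Q ^ (-(1 : ℝ)) := by
      rw [hrdef, hx₀def, ← Real.rpow_natCast Q M, ← Real.rpow_add hQ0]
      norm_num
    rw [h1, Real.rpow_neg_one, inv_le_comm₀ hQ0 (by norm_num)]
    norm_num; linarith
  set N : ℕ → ℝ := fun j => ∑ k ∈ range (n + 1), (a k : ℝ) * Q ^ (k * (j + 1)) with hNdef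
  set E : ℕ → ℝ := fun j => ((c j.succPNat : ℝ) - N j) / (j + 1) with hEdef
  set C : ℝ := A + ∑ k ∈ range (n + 1), |(a k : ℝ)| with hCdef
  have hC0 : 0 ≤ C := by
    apply add_nonneg hA
    exact Finset.sum_nonneg fun k _ => abs_nonneg _
  -- bound on coefficients
  have hpow_le : ∀ (k : ℕ), k ≤ M → ∀ j : ℕ, Q ^ (k * (j + 1)) ≤ r ^ (j + 1) := by
    intro k hk j
    rw [pow_mul, hrdef]
    exact pow_le_pow_left₀ (by positivity) (pow_le_pow_right₀ (by linarith) hk) _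
  have hEbound : ∀ j, |E j| ≤ C * r ^ (j + 1) := by
    intro j
    have hj1 : (1 : ℝ) ≤ (j : ℝ) + 1 := by linarith [Nat.cast_nonneg (α := ℝ) j]
    have hcb : |(c j.succPNat : ℝ)| ≤ A * r ^ (j + 1) := by
      have := hgrow j.succPNat
      rw [Nat.succPNat_coe] at this
      calc |(c j.succPNat : ℝ)| ≤ A * Q ^ (B * (j + 1)) := this
        _ ≤ A * r ^ (j + 1) := by
            apply mul_le_mul_of_nonneg_left (hpow_le B (le_max_right n B) j) hA
    have hNb : |N j| ≤ (∑ k ∈ range (n + 1), |(a k : ℝ)|) * r ^ (j + 1) := by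
      rw [hNdef]
      calc |∑ k ∈ range (n + 1), (a k : ℝ) * Q ^ (k * (j + 1))|
          ≤ ∑ k ∈ range (n + 1), |(a k : ℝ) * Q ^ (k * (j + 1))| :=
            Finset.abs_sum_le_sum_abs _ _
        _ ≤ ∑ k ∈ range (n + 1), |(a k : ℝ)| * r ^ (j + 1) := by
            apply Finset.sum_le_sum
            intro k hk
            rw [abs_mul, abs_of_pos (by positivity : (0:ℝ) < Q ^ (k * (j + 1)))]
            apply mul_le_mul_of_nonneg_left _ (abs_nonneg _)
            exact hpow_le k (le_trans (Nat.lt_succ_iff.mp (Finset.mem_range.mp hk))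
              (le_max_left n B)) j
        _ = (∑ k ∈ range (n + 1), |(a k : ℝ)|) * r ^ (j + 1) := by
            rw [Finset.sum_mul]
    calc |E j| = |(c j.succPNat : ℝ) - N j| / ((j : ℝ) + 1) := by
          rw [hEdef]; rw [abs_div, abs_of_pos (by positivity : (0:ℝ) < (j:ℝ) + 1)]
      _ ≤ |(c j.succPNat : ℝ) - N j| := by
          apply div_le_self (abs_nonneg _) hj1
      _ ≤ |(c j.succPNat : ℝ)| + |N j| := abs_sub _ _
      _ ≤ A * r ^ (j + 1) + (∑ k ∈ range (n + 1), |(a k : ℝ)|) * r ^ (j + 1) :=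
          add_le_add hcb hNb
      _ = C * r ^ (j + 1) := by rw [hCdef, add_mul]
  -- the key summation identity
  have hsum : ∀ x : ℝ, 0 < x → x < x₀ → HasSum (fun j => E j * x ^ (j + 1)) 0 := by
    intro x hx hxlt
    have hQne1 : Q ≠ 1 := by linarith
    set s : ℝ := -Real.logb Q x with hsdef
    have hxs : Q ^ (-s) = x := by
      rw [hsdef, neg_neg]; exact Real.rpow_logb hQ0 hQne1 hx
    have hs : ((M : ℕ) : ℝ) + 1 < s := by
      have h1 : Real.logb Q x < -((M : ℝ) + 1) := by
        rw [Real.logb_lt_iff_lt_rpow hQ1 hx]; rw [hx₀def] at hxlt; exact hxlt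
      rw [hsdef]; linarith
    have hrx : r * x < 1 / 2 := by nlinarith
    have hrx0 : 0 ≤ r * x := by positivity
    have hyk : ∀ k, k ≤ n → 0 < Q ^ k * x ∧ Q ^ k * x < 1 := by
      intro k hk
      refine ⟨by positivity, ?_⟩
      have h1 : Q ^ k ≤ r := by
        rw [hrdef]
        exact pow_le_pow_right₀ (by linarith) (le_trans hk (le_max_left n B))
      nlinarith
    have hfact : ∀ k : ℕ, Q ^ ((k : ℝ) - s) = Q ^ k * x := by
      intro k
      rw [sub_eq_add_neg, Real.rpow_add hQ0, hxs, Real.rpow_natCast]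
    set F : ℕ → ℝ := fun j => (c j.succPNat : ℝ) / ((j : ℝ) + 1) * x ^ (j + 1) with hFdef
    have hFsummable : Summable F := by
      apply Summable.of_norm_bounded (g := fun j => (A * (1 / 2)) * (1 / 2) ^ j)
        ((summable_geometric_of_lt_one (by norm_num) (by norm_num)).mul_left _)
      intro j
      have hc := hgrow j.succPNat
      rw [Nat.succPNat_coe] at hc
      have hj1 : (1 : ℝ) ≤ (j : ℝ) + 1 := by linarith [Nat.cast_nonneg (α := ℝ) j]
      have h1 : ‖F j‖ = |(c j.succPNat : ℝ)| / ((j : ℝ) + 1) * x ^ (j + 1) := by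
        rw [hFdef, Real.norm_eq_abs, abs_mul, abs_div, abs_pow, abs_of_pos hx,
          abs_of_pos (by linarith : (0:ℝ) < (j : ℝ) + 1)]
      rw [h1]
      calc |(c j.succPNat : ℝ)| / ((j : ℝ) + 1) * x ^ (j + 1)
          ≤ |(c j.succPNat : ℝ)| * x ^ (j + 1) := by
            apply mul_le_mul_of_nonneg_right _ (by positivity)
            exact div_le_self (abs_nonneg _) hj1
        _ ≤ (A * r ^ (j + 1)) * x ^ (j + 1) := by
            apply mul_le_mul_of_nonneg_right _ (by positivity)
            exact le_trans hc (mul_le_mul_of_nonneg_left (hpow_le B (le_max_right n B) j) hA)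
        _ = A * (r * x) ^ (j + 1) := by rw [mul_pow]; ring
        _ ≤ A * (1 / 2) ^ (j + 1) := by
            apply mul_le_mul_of_nonneg_left _ hA
            exact pow_le_pow_left₀ hrx0 (by linarith) _
        _ = A * (1 / 2) * (1 / 2) ^ j := by rw [pow_succ]; ring
    set P : ℝ := ∏ k ∈ range (n + 1), (1 - Q ^ ((k : ℝ) - s)) ^ (-(a k)) with hPdef
    have h1yk : ∀ k ∈ range (n + 1), (0 : ℝ) < 1 - Q ^ ((k : ℝ) - s) := by
      intro k hk
      rw [hfact k]
      have := (hyk k (Nat.lt_succ_iff.mp (Finset.mem_range.mp hk))).2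
      linarith
    have hTeq : (∑' m : ℕ+, (c m : ℝ) / ((m : ℕ) : ℝ) * Q ^ (-s * ((m : ℕ) : ℝ)))
        = ∑' j : ℕ, F j := by
      rw [← Equiv.tsum_eq Equiv.pnatEquivNat.symm
        (fun m : ℕ+ => (c m : ℝ) / ((m : ℕ) : ℝ) * Q ^ (-s * ((m : ℕ) : ℝ)))]
      congr 1
      funext j
      have hco : ((Equiv.pnatEquivNat.symm j : ℕ+) : ℕ) = j + 1 := rfl
      show (c (Equiv.pnatEquivNat.symm j) : ℝ) / (((Equiv.pnatEquivNat.symm j : ℕ+) : ℕ) : ℝ)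
          * Q ^ (-s * (((Equiv.pnatEquivNat.symm j : ℕ+) : ℕ) : ℝ)) = F j
      rw [hco]
      have hexp : Q ^ (-s * (((j + 1 : ℕ)) : ℝ)) = x ^ (j + 1) := by
        rw [Real.rpow_mul hQ0.le, hxs, Real.rpow_natCast]
      rw [hexp, hFdef]
      have hcc : c (Equiv.pnatEquivNat.symm j) = c j.succPNat := rfl
      rw [hcc]
      push_cast
      ring
    have hlogP : Real.log P = ∑' j : ℕ, F j := by
      rw [hPdef, ← heq s hs, Real.log_exp, hTeq]
    have hFsum : HasSum F (Real.log P) := by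
      rw [hlogP]; exact hFsummable.hasSum
    have hlogprod : Real.log P = ∑ k ∈ range (n + 1), (a k : ℝ) * (-(Real.log (1 - Q ^ k * x))) := by
      rw [hPdef, Real.log_prod (fun k hk => zpow_ne_zero _ (ne_of_gt (h1yk k hk)))]
      apply Finset.sum_congr rfl
      intro k hk
      rw [Real.log_zpow, hfact k]
      push_cast
      ring
    have hGsum : HasSum (fun j : ℕ => ∑ k ∈ range (n + 1),
        (a k : ℝ) * ((Q ^ k * x) ^ (j + 1) / ((j : ℝ) + 1)))
        (∑ k ∈ range (n + 1), (a k : ℝ) * (-(Real.log (1 - Q ^ k * x)))) := by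
      apply hasSum_sum
      intro k hk
      have hklt : k ≤ n := Nat.lt_succ_iff.mp (Finset.mem_range.mp hk)
      have habs : |Q ^ k * x| < 1 := by
        rw [abs_of_pos (hyk k hklt).1]; exact (hyk k hklt).2
      exact (Real.hasSum_pow_div_log_of_abs_lt_one habs).mul_left _
    have hdiff : HasSum (fun j : ℕ => F j - ∑ k ∈ range (n + 1),
        (a k : ℝ) * ((Q ^ k * x) ^ (j + 1) / ((j : ℝ) + 1))) 0 := by
      have h := hFsum.sub hGsum
      rw [hlogprod, sub_self] at h
      exact h
    have hfinal : (fun j : ℕ => F j - ∑ k ∈ range (n + 1),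
        (a k : ℝ) * ((Q ^ k * x) ^ (j + 1) / ((j : ℝ) + 1)))
        = fun j => E j * x ^ (j + 1) := by
      funext j
      rw [hFdef, hEdef, hNdef]
      have hj0 : ((j : ℝ) + 1) ≠ 0 := by positivity
      have hterm : ∀ k ∈ range (n + 1), (a k : ℝ) * ((Q ^ k * x) ^ (j + 1) / ((j : ℝ) + 1))
          = (a k : ℝ) * Q ^ (k * (j + 1)) * x ^ (j + 1) / ((j : ℝ) + 1) := by
        intro k _
        rw [mul_pow, pow_mul]
        ring
      rw [Finset.sum_congr rfl hterm]
      simp only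
      rw [← Finset.sum_div, ← Finset.sum_mul]
      field_simp
    exact hfinal ▸ hdiff
  have hEzero := coeff_zero_of_hasSum_zero E C r hC0 hrpos hEbound x₀ hx₀pos hrx₀ hsum
  intro m
  have h := hEzero m.natPred
  rw [hEdef] at h
  simp only [PNat.succPNat_natPred] at h
  have hm1 : (m.natPred : ℝ) + 1 = ((m : ℕ) : ℝ) := by
    rw [← PNat.natPred_add_one m]; push_cast; ring
  rw [hm1] at h
  have hmne : ((m : ℕ) : ℝ) ≠ 0 := by
    exact_mod_cast m.ne_zero
  have h2 : (c m : ℝ) = N m.natPred := by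
    field_simp at h
    linarith
  rw [hNdef] at h2
  have h3 : ∀ k, k * (m.natPred + 1) = k * (m : ℕ) := by
    intro k; rw [PNat.natPred_add_one]
  simp only [h3] at h2
  have h4 : ((c m : ℤ) : ℝ) = ((∑ k ∈ range (n + 1), a k * (q : ℤ) ^ (k * (m : ℕ)) : ℤ) : ℝ) := by
    push_cast
    exact h2
  exact_mod_cast h4
end

section
/- Let n be a natural number, a_0,…,a_n integers, ℓ ≥ 1 an integer, and s a complex number with Re(s) > n + 1/ℓ. Then the family (∏_{k=0}^n (1 − p^{ℓ(k−s)})^{−a_k})_{p prime}, indexed by the prime numbers, is multipliable, and its product satisfies ∏_{p prime} ∏_{k=0}^n (1 − p^{ℓ(k−s)})^{−a_k} = ∏_{k=0}^n ζ(ℓ(s−k))^{a_k}, where ζ is the Riemann zeta function, p^{ℓ(k−s)} is the principal complex power of the positive real p, and the integer exponents are taken as zpow (each factor is nonzero since Re(ℓ(s−k)) > 1 for 0 ≤ k ≤ n, so ζ(ℓ(s−k)) ≠ 0). -/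
private lemma hasProd_inv₀ {ι : Type*} {f : ι → ℂ} {P : ℂ} (h : HasProd f P) (hP : P ≠ 0) :
    HasProd (fun i => (f i)⁻¹) P⁻¹ := by
  exact h.inv₀ hP

private lemma hasProd_pow {ι : Type*} {f : ι → ℂ} {P : ℂ} (h : HasProd f P) (m : ℕ) :
    HasProd (fun i => (f i) ^ m) (P ^ m) := by
  induction m with
  | zero => simpa using hasProd_one
  | succ m ih => simpa [pow_succ] using ih.mul h

private lemma hasProd_zpow {ι : Type*} {f : ι → ℂ} {P : ℂ} (h : HasProd f P) (hP : P ≠ 0)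
    (m : ℤ) : HasProd (fun i => (f i) ^ m) (P ^ m) := by
  cases m with
  | ofNat b => simpa using hasProd_pow h b
  | negSucc b =>
      simp only [zpow_negSucc]
      exact hasProd_inv₀ (hasProd_pow h (b + 1)) (pow_ne_zero _ hP)

/-- (ii) ⇔ (i) of the main theorem on schemes of `F_{1^ℓ}`-type: the product over all primes of
the local Euler factors `∏_{k=0}^n (1 - p^{ℓ(k-s)})^{-a_k}` is multipliable and equals
`∏_{k=0}^n ζ(ℓ(s-k))^{a_k}` for `Re(s) > n + 1/ℓ`. -/
theorem stmt_2 (n : ℕ) (a : ℕ → ℤ) (ℓ : ℕ) (hℓ : 1 ≤ ℓ) (s : ℂ)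
    (hs : (n : ℝ) + 1 / (ℓ : ℝ) < s.re) :
    Multipliable (fun p : Nat.Primes =>
      ∏ k ∈ Finset.range (n + 1),
        ((1 : ℂ) - ((p : ℕ) : ℂ) ^ ((ℓ : ℂ) * ((k : ℂ) - s))) ^ (-(a k)))
    ∧ (∏' p : Nat.Primes,
        ∏ k ∈ Finset.range (n + 1),
          ((1 : ℂ) - ((p : ℕ) : ℂ) ^ ((ℓ : ℂ) * ((k : ℂ) - s))) ^ (-(a k)))
      = ∏ k ∈ Finset.range (n + 1), (riemannZeta ((ℓ : ℂ) * (s - (k : ℂ)))) ^ (a k) := by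
  have hℓ0 : (0 : ℝ) < (ℓ : ℝ) := by exact_mod_cast hℓ
  -- for each k ≤ n, the real part of ℓ*(s-k) exceeds 1
  have hre : ∀ k ∈ Finset.range (n + 1), 1 < ((ℓ : ℂ) * (s - (k : ℂ))).re := by
    intro k hk
    have hkn : (k : ℝ) ≤ (n : ℝ) := by
      exact_mod_cast Nat.lt_succ_iff.mp (Finset.mem_range.mp hk)
    have h1 : (k : ℝ) + 1 / (ℓ : ℝ) < s.re := by linarith
    have : 1 / (ℓ : ℝ) < s.re - (k : ℝ) := by linarith
    have h2 : 1 < (ℓ : ℝ) * (s.re - (k : ℝ)) := by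
      rw [div_lt_iff₀ hℓ0] at this
      nlinarith
    simpa [Complex.mul_re, Complex.sub_re] using h2
  -- rewrite exponent
  have hexp : ∀ (k : ℕ) (p : Nat.Primes),
      ((p : ℕ) : ℂ) ^ ((ℓ : ℂ) * ((k : ℂ) - s))
        = ((p : ℕ) : ℂ) ^ (-((ℓ : ℂ) * (s - (k : ℂ)))) := by
    intro k p
    ring_nf
  have key : HasProd (fun p : Nat.Primes =>
      ∏ k ∈ Finset.range (n + 1),
        ((1 : ℂ) - ((p : ℕ) : ℂ) ^ ((ℓ : ℂ) * ((k : ℂ) - s))) ^ (-(a k)))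
      (∏ k ∈ Finset.range (n + 1), (riemannZeta ((ℓ : ℂ) * (s - (k : ℂ)))) ^ (a k)) := by
    apply hasProd_prod
    intro k hk
    have hrk := hre k hk
    have hζ : riemannZeta ((ℓ : ℂ) * (s - (k : ℂ))) ≠ 0 :=
      riemannZeta_ne_zero_of_one_lt_re hrk
    have base := riemannZeta_eulerProduct_hasProd hrk
    have h1 : HasProd (fun p : Nat.Primes =>
        (((1 : ℂ) - ((p : ℕ) : ℂ) ^ (-((ℓ : ℂ) * (s - (k : ℂ)))))⁻¹) ^ (a k))
        ((riemannZeta ((ℓ : ℂ) * (s - (k : ℂ)))) ^ (a k)) :=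
      hasProd_zpow base hζ (a k)
    have heq : ∀ p : Nat.Primes,
        (((1 : ℂ) - ((p : ℕ) : ℂ) ^ (-((ℓ : ℂ) * (s - (k : ℂ)))))⁻¹) ^ (a k)
          = ((1 : ℂ) - ((p : ℕ) : ℂ) ^ ((ℓ : ℂ) * ((k : ℂ) - s))) ^ (-(a k)) := by
      intro p
      rw [hexp k p, inv_zpow']
    simpa [heq] using h1
  exact ⟨key.multipliable, key.tprod_eq⟩
end

section
/- Let n be a natural number, a_0,…,a_n integers, ℓ ≥ 1 an integer, and s a complex number with s ∉ {0, 1, …, n}. Then, as the complex variable p tends to 1 within ℂ \ {1} (along the punctured neighborhood filter of 1), the function p ↦ ( ∏_{k=0}^n (1 − p^{ℓ(k−s)})^{−a_k} ) · (p − 1)^{∑_{k=0}^n a_k} tends to ∏_{k=0}^n (ℓ(s−k))^{−a_k}. Here p^{ℓ(k−s)} denotes the principal complex power, the integer exponents are taken as zpow, and for p ≠ 1 sufficiently close to 1 each base 1 − p^{ℓ(k−s)} is nonzero so the expression is well defined. -/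
private lemma zpow_sum_aux {ι : Type*} {x : ℂ} (hx : x ≠ 0) (s : Finset ι) (f : ι → ℤ) :
    x ^ (∑ i ∈ s, f i) = ∏ i ∈ s, x ^ f i := by
  induction s using Finset.cons_induction with
  | empty => simp
  | cons i s hi ih => rw [Finset.sum_cons, Finset.prod_cons, zpow_add₀ hx, ih]

/-- The `F_{1^ℓ}`-zeta function as a limit: as the complex variable `p` tends to `1` within
`ℂ \ {1}`, the function `p ↦ (∏_{k=0}^n (1 - p^{ℓ(k-s)})^{-a_k}) · (p-1)^{∑ a_k}` tends to
`∏_{k=0}^n (ℓ(s-k))^{-a_k}`, provided `s ∉ {0, 1, …, n}`. -/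
theorem stmt_3 (n : ℕ) (a : ℕ → ℤ) (ℓ : ℕ) (hℓ : 1 ≤ ℓ) (s : ℂ)
    (hs : ∀ k ∈ Finset.range (n + 1), s ≠ (k : ℂ)) :
    Filter.Tendsto
      (fun p : ℂ =>
        (∏ k ∈ Finset.range (n + 1), ((1 : ℂ) - p ^ ((ℓ : ℂ) * ((k : ℂ) - s))) ^ (-(a k)))
          * (p - 1) ^ (∑ k ∈ Finset.range (n + 1), a k))
      (nhdsWithin (1 : ℂ) {(1 : ℂ)}ᶜ)
      (nhds (∏ k ∈ Finset.range (n + 1), ((ℓ : ℂ) * (s - (k : ℂ))) ^ (-(a k)))) := by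
  have hℓ0 : (ℓ : ℂ) ≠ 0 := by
    exact_mod_cast Nat.cast_ne_zero.mpr (by omega)
  -- the key ratio limit for each k
  have key : ∀ k ∈ Finset.range (n + 1),
      Filter.Tendsto (fun p : ℂ => ((1 : ℂ) - p ^ ((ℓ : ℂ) * ((k : ℂ) - s))) / (p - 1))
        (nhdsWithin (1 : ℂ) {(1 : ℂ)}ᶜ) (nhds ((ℓ : ℂ) * (s - (k : ℂ)))) := by
    intro k hk
    set c : ℂ := (ℓ : ℂ) * ((k : ℂ) - s) with hc
    have hderiv : HasDerivAt (fun p : ℂ => p ^ c) c 1 := by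
      have := (hasDerivAt_id (1 : ℂ)).cpow_const (c := c) (by norm_num)
      simpa using this
    have hslope := hasDerivAt_iff_tendsto_slope.mp hderiv
    have hneg := hslope.neg
    have : Filter.Tendsto (fun p : ℂ => ((1 : ℂ) - p ^ c) / (p - 1))
        (nhdsWithin (1 : ℂ) {(1 : ℂ)}ᶜ) (nhds (-c)) := by
      refine hneg.congr' ?_
      filter_upwards [self_mem_nhdsWithin] with p hp
      rw [slope_def_field, Complex.one_cpow]
      ring
    have hc' : -c = (ℓ : ℂ) * (s - (k : ℂ)) := by rw [hc]; ring
    rwa [hc'] at this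
  -- limits of each factor
  have keyz : ∀ k ∈ Finset.range (n + 1),
      Filter.Tendsto (fun p : ℂ => (((1 : ℂ) - p ^ ((ℓ : ℂ) * ((k : ℂ) - s))) / (p - 1)) ^ (-(a k)))
        (nhdsWithin (1 : ℂ) {(1 : ℂ)}ᶜ)
        (nhds (((ℓ : ℂ) * (s - (k : ℂ))) ^ (-(a k)))) := by
    intro k hk
    have hne : (ℓ : ℂ) * (s - (k : ℂ)) ≠ 0 :=
      mul_ne_zero hℓ0 (sub_ne_zero.mpr (hs k hk))
    exact ((continuousAt_zpow₀ _ _ (Or.inl hne)).tendsto).comp (key k hk)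
  have hprod := tendsto_finset_prod (Finset.range (n + 1)) keyz
  refine hprod.congr' ?_
  have hev : ∀ᶠ p in nhdsWithin (1 : ℂ) {(1 : ℂ)}ᶜ,
      ∀ k ∈ Finset.range (n + 1), ((1 : ℂ) - p ^ ((ℓ : ℂ) * ((k : ℂ) - s))) / (p - 1) ≠ 0 := by
    rw [Filter.eventually_all_finset]
    intro k hk
    exact (key k hk).eventually_ne (mul_ne_zero hℓ0 (sub_ne_zero.mpr (hs k hk)))
  filter_upwards [self_mem_nhdsWithin, hev] with p hp hnum
  have hp1 : p - 1 ≠ 0 := sub_ne_zero.mpr hp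
  calc ∏ k ∈ Finset.range (n + 1),
        (((1 : ℂ) - p ^ ((ℓ : ℂ) * ((k : ℂ) - s))) / (p - 1)) ^ (-(a k))
      = ∏ k ∈ Finset.range (n + 1),
        ((1 : ℂ) - p ^ ((ℓ : ℂ) * ((k : ℂ) - s))) ^ (-(a k)) * (p - 1) ^ (a k) := by
        refine Finset.prod_congr rfl fun k hk => ?_
        rw [div_zpow, zpow_neg (p - 1)]
        field_simp
    _ = (∏ k ∈ Finset.range (n + 1), ((1 : ℂ) - p ^ ((ℓ : ℂ) * ((k : ℂ) - s))) ^ (-(a k)))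
          * (p - 1) ^ (∑ k ∈ Finset.range (n + 1), a k) := by
        rw [Finset.prod_mul_distrib, zpow_sum_aux hp1]
end

section
/- Fix integers ℓ ≥ 1 and m ≥ 0, and let M = WithZero (Multiplicative (ZMod ℓ)) be the cyclic group μ_ℓ of order ℓ with an absorbing zero adjoined. On the set of nonzero tuples x : Fin (m+1) → M (those with at least one nonzero entry), define x ∼ y iff there exists c ∈ Multiplicative (ZMod ℓ) with y(i) = (c : M)·x(i) for all i. Then ∼ is an equivalence relation and the set of equivalence classes is finite of cardinality ∑_{i=0}^{m} (ℓ+1)^i. -/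
/-- The monoid `F_{1^ℓ}`: the cyclic group `μ_ℓ` of order `ℓ` with an absorbing zero. -/
abbrev FOneExt (ℓ : ℕ) : Type := WithZero (Multiplicative (ZMod ℓ))

/-- The set of nonzero `(m+1)`-tuples over `F_{1^ℓ}` (those with at least one nonzero entry). -/
def NonzeroTuples (ℓ m : ℕ) : Type :=
  {x : Fin (m + 1) → FOneExt ℓ // ∃ i, x i ≠ 0}

/-- Proportionality: `x ∼ y` iff `y = c · x` for some scalar `c ∈ μ_ℓ`. -/
def projRel (ℓ m : ℕ) (x y : NonzeroTuples ℓ m) : Prop :=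
  ∃ c : Multiplicative (ZMod ℓ), ∀ i, y.1 i = (c : FOneExt ℓ) * x.1 i

namespace ProjAux

attribute [local instance] Classical.propDecidable

variable {ℓ m : ℕ}

open Finset

noncomputable def supp (x : NonzeroTuples ℓ m) : Finset (Fin (m + 1)) :=
  univ.filter fun i => x.1 i ≠ 0

lemma supp_nonempty (x : NonzeroTuples ℓ m) : (supp x).Nonempty := by
  obtain ⟨i, hi⟩ := x.2
  exact ⟨i, by simp [supp, hi]⟩

lemma mem_supp {x : NonzeroTuples ℓ m} {i : Fin (m + 1)} : i ∈ supp x ↔ x.1 i ≠ 0 := by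
  simp [supp]

noncomputable def lastIdx (x : NonzeroTuples ℓ m) : Fin (m + 1) :=
  (supp x).max' (supp_nonempty x)

lemma lastIdx_spec (x : NonzeroTuples ℓ m) : x.1 (lastIdx x) ≠ 0 :=
  mem_supp.1 ((supp x).max'_mem (supp_nonempty x))

lemma lastIdx_gt (x : NonzeroTuples ℓ m) {j : Fin (m + 1)} (h : lastIdx x < j) : x.1 j = 0 := by
  by_contra hne
  exact absurd (le_max' (supp x) j (mem_supp.2 hne)) (not_le.2 h)

lemma lastIdx_unique (x : NonzeroTuples ℓ m) {i : Fin (m + 1)}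
    (h1 : x.1 i ≠ 0) (h2 : ∀ j, i < j → x.1 j = 0) : lastIdx x = i := by
  refine le_antisymm (Finset.max'_le _ _ _ fun j hj => ?_) (le_max' (supp x) i (mem_supp.2 h1))
  by_contra hlt
  exact (mem_supp.1 hj) (h2 j (not_le.1 hlt))

/-- Normalization: last nonzero index together with the earlier entries divided by the
last nonzero entry. -/
noncomputable def phi (x : NonzeroTuples ℓ m) : Σ i : Fin (m + 1), Fin (i : ℕ) → FOneExt ℓ :=
  ⟨lastIdx x, fun j => x.1 ⟨j, j.2.trans (lastIdx x).2⟩ * (x.1 (lastIdx x))⁻¹⟩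

/-- Inverse: put the given entries before `i`, a `1` at `i`, and `0` afterwards. -/
noncomputable def psi (s : Σ i : Fin (m + 1), Fin (i : ℕ) → FOneExt ℓ) : NonzeroTuples ℓ m :=
  ⟨fun k => if h : (k : ℕ) < (s.1 : ℕ) then s.2 ⟨k, h⟩ else if k = s.1 then 1 else 0,
   ⟨s.1, by simp⟩⟩

lemma psi_apply_lt (s : Σ i : Fin (m + 1), Fin (i : ℕ) → FOneExt ℓ) {k : Fin (m + 1)}
    (h : (k : ℕ) < (s.1 : ℕ)) : (psi s).1 k = s.2 ⟨k, h⟩ := dif_pos h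

lemma psi_apply_self (s : Σ i : Fin (m + 1), Fin (i : ℕ) → FOneExt ℓ) :
    (psi s).1 s.1 = 1 := by
  show dite _ _ _ = 1
  rw [dif_neg (lt_irrefl (s.1 : ℕ)), if_pos rfl]

lemma psi_apply_gt (s : Σ i : Fin (m + 1), Fin (i : ℕ) → FOneExt ℓ) {k : Fin (m + 1)}
    (h : s.1 < k) : (psi s).1 k = 0 := by
  have h1 : ¬ ((k : ℕ) < (s.1 : ℕ)) := by
    have : (s.1 : ℕ) < (k : ℕ) := h
    omega
  have h2 : k ≠ s.1 := fun hk => absurd (hk ▸ h) (lt_irrefl _)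
  show dite _ _ _ = 0
  rw [dif_neg h1, if_neg h2]

lemma lastIdx_psi (s : Σ i : Fin (m + 1), Fin (i : ℕ) → FOneExt ℓ) :
    lastIdx (psi s) = s.1 :=
  lastIdx_unique _ (by rw [psi_apply_self]; exact one_ne_zero)
    (fun j hj => psi_apply_gt s hj)

lemma phi_psi (s : Σ i : Fin (m + 1), Fin (i : ℕ) → FOneExt ℓ) : phi (psi s) = s := by
  have h1 : lastIdx (psi s) = s.1 := lastIdx_psi s
  refine Sigma.ext h1 ?_
  rw [Fin.heq_fun_iff (congrArg Fin.val h1 : ((phi (psi s)).1 : ℕ) = (s.1 : ℕ))]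
  intro j
  have hj : (j : ℕ) < (s.1 : ℕ) := h1 ▸ j.2
  have hself : (psi s).1 (lastIdx (psi s)) = 1 := by rw [h1]; exact psi_apply_self s
  show (psi s).1 ⟨j, _⟩ * ((psi s).1 (lastIdx (psi s)))⁻¹ = _
  rw [hself, inv_one, mul_one, psi_apply_lt s hj]

lemma rel_psi_phi (x : NonzeroTuples ℓ m) : projRel ℓ m (psi (phi x)) x := by
  refine ⟨WithZero.unzero (lastIdx_spec x), fun k => ?_⟩
  rw [WithZero.coe_unzero]
  rcases lt_trichotomy k (lastIdx x) with h | h | h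
  · have h' : (k : ℕ) < ((phi x).1 : ℕ) := h
    rw [psi_apply_lt (phi x) h']
    show x.1 k = x.1 (lastIdx x) * (x.1 k * (x.1 (lastIdx x))⁻¹)
    rw [← mul_assoc, mul_comm (x.1 (lastIdx x)) (x.1 k), mul_assoc,
      mul_inv_cancel₀ (lastIdx_spec x), mul_one]
  · subst h
    rw [show (psi (phi x)).1 (lastIdx x) = 1 from psi_apply_self (phi x), mul_one]
  · rw [psi_apply_gt (phi x) (show (phi x).1 < k from h), mul_zero, lastIdx_gt x h]

lemma phi_rel (x y : NonzeroTuples ℓ m) (h : projRel ℓ m x y) : phi x = phi y := by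
  obtain ⟨c, hc⟩ := h
  have hc0 : (c : FOneExt ℓ) ≠ 0 := WithZero.coe_ne_zero
  have h1 : lastIdx y = lastIdx x := by
    refine lastIdx_unique y ?_ (fun j hj => ?_)
    · rw [hc]
      exact mul_ne_zero hc0 (lastIdx_spec x)
    · rw [hc, lastIdx_gt x hj, mul_zero]
  refine Sigma.ext h1.symm ?_
  rw [Fin.heq_fun_iff (congrArg Fin.val h1.symm : ((phi x).1 : ℕ) = ((phi y).1 : ℕ))]
  intro j
  have hy : y.1 (lastIdx y) = (c : FOneExt ℓ) * x.1 (lastIdx x) := by rw [h1]; exact hc _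
  show x.1 ⟨j, _⟩ * (x.1 (lastIdx x))⁻¹ = y.1 ⟨j, _⟩ * (y.1 (lastIdx y))⁻¹
  rw [hy, hc, mul_inv, mul_mul_mul_comm, mul_inv_cancel₀ hc0, one_mul]

noncomputable def quotEquiv : Quot (projRel ℓ m) ≃ (Σ i : Fin (m + 1), Fin (i : ℕ) → FOneExt ℓ) where
  toFun := Quot.lift phi phi_rel
  invFun := fun s => Quot.mk _ (psi s)
  left_inv := by
    intro q
    induction q using Quot.ind with
    | _ x => exact Quot.sound (rel_psi_phi x)
  right_inv := phi_psi

end ProjAux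

/-- Proportionality is an equivalence relation on the nonzero `(m+1)`-tuples over `F_{1^ℓ}`,
and the set of equivalence classes (the projective frame `P(m, F_{1^ℓ})`) is finite of
cardinality `∑_{i=0}^m (ℓ+1)^i`. -/
theorem stmt_9 (ℓ m : ℕ) (hℓ : 1 ≤ ℓ) :
    Equivalence (projRel ℓ m)
    ∧ Nat.card (Quot (projRel ℓ m)) = ∑ i ∈ Finset.range (m + 1), (ℓ + 1) ^ i := by
  haveI : NeZero ℓ := ⟨by omega⟩
  constructor
  · refine ⟨fun x => ⟨1, fun i => by simp⟩, ?_, ?_⟩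
    · rintro x y ⟨c, hc⟩
      refine ⟨c⁻¹, fun i => ?_⟩
      rw [hc i, ← mul_assoc, ← WithZero.coe_mul, inv_mul_cancel, WithZero.coe_one, one_mul]
    · rintro x y z ⟨c, hc⟩ ⟨d, hd⟩
      refine ⟨d * c, fun i => ?_⟩
      rw [hd i, hc i, ← mul_assoc, ← WithZero.coe_mul]
  · haveI : Fintype (FOneExt ℓ) := inferInstanceAs (Fintype (Option (Multiplicative (ZMod ℓ))))
    rw [Nat.card_congr (ProjAux.quotEquiv), Nat.card_eq_fintype_card, Fintype.card_sigma]
    have hcard : Fintype.card (FOneExt ℓ) = ℓ + 1 := by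
      rw [Fintype.card_congr
          (show FOneExt ℓ ≃ Option (Multiplicative (ZMod ℓ)) from Equiv.refl _),
        Fintype.card_option, Fintype.card_multiplicative, ZMod.card]
    have key : ∀ i : Fin (m + 1), Fintype.card (Fin (i : ℕ) → FOneExt ℓ) = (ℓ + 1) ^ (i : ℕ) := by
      intro i
      rw [Fintype.card_fun, hcard, Fintype.card_fin]
    simp only [key]
    exact Fin.sum_univ_eq_sum_range _ _
end

section
/- Let q ≥ 2 be a natural number, n a natural number, and s a complex number with Re(s) > n. Then the series ∑_{m=1}^∞ (∑_{k=0}^n q^{km})/m · q^{−sm} converges absolutely, 1 − q^{k−s} ≠ 0 for every k ∈ {0,…,n}, and exp( ∑_{m=1}^∞ (∑_{k=0}^n q^{km})/m · q^{−sm} ) = ∏_{k=0}^n (1 − q^{k−s})^{−1}, where q^{k−s} and q^{−sm} denote principal complex powers of the positive real q. -/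
/-- The local zeta function of projective `n`-space over `F_q`: for `Re(s) > n`, the series
`∑_{m≥1} (∑_{k=0}^n q^{km})/m · q^{-sm}` converges absolutely and
`exp(∑_{m≥1} (∑_{k=0}^n q^{km})/m · q^{-sm}) = ∏_{k=0}^n (1 - q^{k-s})⁻¹`. -/
theorem stmt_11 (q : ℕ) (hq : 2 ≤ q) (n : ℕ) (s : ℂ) (hs : (n : ℝ) < s.re) :
    Summable (fun m : ℕ+ =>
      ‖((∑ k ∈ Finset.range (n + 1), (q : ℂ) ^ (k * (m : ℕ))) / ((m : ℕ) : ℂ))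
        * (q : ℂ) ^ (-s * ((m : ℕ) : ℂ))‖)
    ∧ (∀ k ∈ Finset.range (n + 1), (1 : ℂ) - (q : ℂ) ^ ((k : ℂ) - s) ≠ 0)
    ∧ Complex.exp (∑' m : ℕ+,
        ((∑ k ∈ Finset.range (n + 1), (q : ℂ) ^ (k * (m : ℕ))) / ((m : ℕ) : ℂ))
          * (q : ℂ) ^ (-s * ((m : ℕ) : ℂ)))
      = ∏ k ∈ Finset.range (n + 1), ((1 : ℂ) - (q : ℂ) ^ ((k : ℂ) - s))⁻¹ := by
  have hq0 : (0 : ℝ) < q := by positivity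
  have hq1 : (1 : ℝ) < q := by exact_mod_cast hq.trans_lt' one_lt_two
  have hqC : (q : ℂ) ≠ 0 := by exact_mod_cast hq0.ne'
  set z : ℕ → ℂ := fun k => (q : ℂ) ^ ((k : ℂ) - s) with hz
  have hnorm : ∀ k ∈ Finset.range (n + 1), ‖z k‖ < 1 := by
    intro k hk
    have hk' : (k : ℝ) ≤ n := by
      exact_mod_cast Nat.lt_succ_iff.mp (Finset.mem_range.mp hk)
    have : ‖z k‖ = (q : ℝ) ^ (((k : ℂ) - s).re) := by
      rw [hz]
      rw [show ((q : ℂ)) = ((q : ℝ) : ℂ) by norm_num]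
      rw [Complex.norm_cpow_eq_rpow_re_of_pos hq0]
    rw [this]
    apply Real.rpow_lt_one_of_one_lt_of_neg hq1
    simp only [Complex.sub_re, Complex.natCast_re]
    linarith
  -- key algebraic identity
  have key : ∀ (k : ℕ) (m : ℕ+),
      (q : ℂ) ^ (k * (m : ℕ)) * (q : ℂ) ^ (-s * ((m : ℕ) : ℂ)) = (z k) ^ (m : ℕ) := by
    intro k m
    show (q : ℂ) ^ (k * (m : ℕ)) * (q : ℂ) ^ (-s * ((m : ℕ) : ℂ))
      = ((q : ℂ) ^ ((k : ℂ) - s)) ^ (m : ℕ)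
    rw [Complex.cpow_sub _ _ hqC, Complex.cpow_natCast, div_pow, ← pow_mul,
      mul_comm (-s) ((m : ℕ) : ℂ), Complex.cpow_nat_mul, Complex.cpow_neg, inv_pow]
    ring
  have hterm : ∀ m : ℕ+,
      ((∑ k ∈ Finset.range (n + 1), (q : ℂ) ^ (k * (m : ℕ))) / ((m : ℕ) : ℂ))
        * (q : ℂ) ^ (-s * ((m : ℕ) : ℂ))
      = ∑ k ∈ Finset.range (n + 1), (z k) ^ (m : ℕ) / ((m : ℕ) : ℂ) := by
    intro m
    rw [div_mul_eq_mul_div, Finset.sum_mul, Finset.sum_div]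
    exact Finset.sum_congr rfl fun k _ => by rw [key]
  -- for each k, HasSum over ℕ+
  have hinj : Function.Injective (fun m : ℕ+ => (m : ℕ)) := fun a b h => PNat.coe_injective h
  have hHS : ∀ k ∈ Finset.range (n + 1),
      HasSum (fun m : ℕ+ => (z k) ^ (m : ℕ) / ((m : ℕ) : ℂ)) (-Complex.log (1 - z k)) := by
    intro k hk
    have h := Complex.hasSum_taylorSeries_neg_log (hnorm k hk)
    refine (Function.Injective.hasSum_iff hinj ?_).mpr h
    intro x hx
    have : x = 0 := by
      by_contra h0
      exact hx ⟨⟨x, Nat.pos_of_ne_zero h0⟩, rfl⟩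
    simp [this]
  have hne : ∀ k ∈ Finset.range (n + 1), (1 : ℂ) - z k ≠ 0 := by
    intro k hk h
    have h1 : z k = 1 := by linear_combination -h
    have h2 := hnorm k hk
    rw [h1] at h2; simp at h2
  -- summability of norms
  have hsum1 : Summable (fun m : ℕ+ =>
      ‖((∑ k ∈ Finset.range (n + 1), (q : ℂ) ^ (k * (m : ℕ))) / ((m : ℕ) : ℂ))
        * (q : ℂ) ^ (-s * ((m : ℕ) : ℂ))‖) := by
    have hS : ∀ k ∈ Finset.range (n + 1),
        Summable (fun m : ℕ+ => ‖(z k) ^ (m : ℕ) / ((m : ℕ) : ℂ)‖) := by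
      intro k hk
      apply Summable.of_nonneg_of_le (fun m => norm_nonneg _)
        (fun m => ?_) (((summable_geometric_of_lt_one (norm_nonneg (z k))
          (hnorm k hk)).comp_injective hinj))
      have hm1 : (1 : ℝ) ≤ ((m : ℕ) : ℝ) := by exact_mod_cast m.one_le
      calc ‖(z k) ^ (m : ℕ) / ((m : ℕ) : ℂ)‖ = ‖z k‖ ^ (m : ℕ) / ((m : ℕ) : ℝ) := by
            simp [norm_div, norm_pow, Complex.norm_natCast]
        _ ≤ ‖z k‖ ^ (m : ℕ) / 1 := by
            apply div_le_div_of_nonneg_left (by positivity) one_pos hm1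
        _ = ‖z k‖ ^ (m : ℕ) := by ring
    have hSsum : Summable (fun m : ℕ+ =>
        ∑ k ∈ Finset.range (n + 1), ‖(z k) ^ (m : ℕ) / ((m : ℕ) : ℂ)‖) :=
      summable_sum fun k hk => hS k hk
    apply Summable.of_nonneg_of_le (fun m => norm_nonneg _) (fun m => ?_) hSsum
    rw [hterm m]
    exact norm_sum_le _ _
  refine ⟨hsum1, hne, ?_⟩
  have hHSsum : HasSum (fun m : ℕ+ =>
      ((∑ k ∈ Finset.range (n + 1), (q : ℂ) ^ (k * (m : ℕ))) / ((m : ℕ) : ℂ))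
        * (q : ℂ) ^ (-s * ((m : ℕ) : ℂ)))
      (∑ k ∈ Finset.range (n + 1), -Complex.log (1 - z k)) := by
    have h3 := hasSum_sum (f := fun k (m : ℕ+) => (z k) ^ (m : ℕ) / ((m : ℕ) : ℂ))
      (s := Finset.range (n + 1)) (a := fun k => -Complex.log (1 - z k)) hHS
    convert h3 using 1
    funext m
    exact hterm m
  rw [hHSsum.tsum_eq, Complex.exp_sum]
  exact Finset.prod_congr rfl fun k hk => by
    rw [Complex.exp_neg, Complex.exp_log (hne k hk)]
end
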